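/- Let z be a complex number with z ≠ 1. For every integer n ≥ 0, B_n(u,z) = Σ_{k=0}^{n} k C(n,k) Σ_{j=0}^{k−1} (-1)^j z^j (z−1)^{−j−1} j! S(k−1, j) u^{n−k}, where S denotes Stirling numbers of the second kind. -/

import Mathlib

open Finset

/-- Stirling numbers of the second kind, via the standard recurrence. -/
def stirling : ℕ → ℕ → ℕ
  | 0, 0 => 1
  | 0, _ + 1 => 0
  | _ + 1, 0 => 0
  | n + 1, k + 1 => (k + 1) * stirling n (k + 1) + stirling n k

lemma stirling_eq_zero_of_lt : ∀ m j : ℕ, m < j → stirling m j = 0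
  | 0, j + 1, _ => rfl
  | m + 1, j + 1, h => by
    have h1 : m < j + 1 := by omega
    have h2 : m < j := by omega
    simp [stirling, stirling_eq_zero_of_lt m (j+1) h1, stirling_eq_zero_of_lt m j h2]

lemma stirling_formula : ∀ m j : ℕ,
    ∑ i ∈ range (j + 1), (-1 : ℂ) ^ i * (j.choose i : ℂ) * (i : ℂ) ^ m
      = (-1) ^ j * (j.factorial : ℂ) * (stirling m j : ℂ)
  | 0, 0 => by simp [stirling]
  | 0, j + 1 => by
    have : ∑ i ∈ range (j + 2), (-1 : ℂ) ^ i * ((j+1).choose i : ℂ) * (i : ℂ) ^ 0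
        = ((-1 : ℂ) + 1) ^ (j + 1) := by
      rw [add_pow]
      refine Finset.sum_congr rfl fun i hi => ?_
      ring
    simp only [this]
    simp [stirling]
  | m + 1, 0 => by simp [stirling]
  | m + 1, j + 1 => by
    have key : ∑ i ∈ range (j + 2), (-1 : ℂ) ^ i * ((j+1).choose i : ℂ) * (i : ℂ) ^ (m+1)
        = ((j:ℂ)+1) * ((∑ i ∈ range (j + 2), (-1 : ℂ) ^ i * ((j+1).choose i : ℂ) * (i : ℂ) ^ m)
            - (∑ i ∈ range (j + 1), (-1 : ℂ) ^ i * (j.choose i : ℂ) * (i : ℂ) ^ m)) := by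
      have cast1 : ∀ i : ℕ, (((j+1).choose (i+1) : ℂ)) * ((i : ℂ) + 1) = ((j:ℂ)+1) * (j.choose i : ℂ) := by
        intro i
        have h := Nat.add_one_mul_choose_eq j i
        have : ((j+1).choose (i+1) * (i+1) : ℕ) = ((j+1) * j.choose i : ℕ) := by
          simpa [Nat.succ_eq_add_one] using h.symm
        exact_mod_cast this
      have cast2 : ∀ i : ℕ, (((j+1).choose (i+1) : ℂ)) = (j.choose i : ℂ) + (j.choose (i+1) : ℂ) := by
        intro i; exact_mod_cast congrArg (Nat.cast : ℕ → ℂ) (Nat.choose_succ_succ j i)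
      have e1 : ∑ i ∈ range (j + 2), (-1 : ℂ) ^ i * ((j+1).choose i : ℂ) * (i : ℂ) ^ (m+1)
          = ∑ i ∈ range (j + 1), (-1 : ℂ) ^ (i+1) * ((j+1).choose (i+1) : ℂ) * ((i : ℂ)+1) ^ (m+1) := by
        rw [Finset.sum_range_succ']
        push_cast
        simp
      have e2 : ∑ i ∈ range (j + 1), (-1 : ℂ) ^ (i+1) * ((j+1).choose (i+1) : ℂ) * ((i : ℂ)+1) ^ (m+1)
          = -(((j:ℂ)+1)) * ∑ i ∈ range (j + 1), (-1 : ℂ) ^ i * (j.choose i : ℂ) * ((i : ℂ)+1) ^ m := by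
        rw [Finset.mul_sum]
        refine Finset.sum_congr rfl fun i _ => ?_
        have : ((i : ℂ)+1) ^ (m+1) = ((i : ℂ)+1) ^ m * ((i : ℂ)+1) := by ring
        rw [this]
        calc (-1 : ℂ) ^ (i+1) * ((j+1).choose (i+1) : ℂ) * (((i : ℂ)+1) ^ m * ((i : ℂ)+1))
            = (-1 : ℂ) ^ (i+1) * (((j+1).choose (i+1) : ℂ) * ((i : ℂ)+1)) * ((i : ℂ)+1) ^ m := by ring
          _ = (-1 : ℂ) ^ (i+1) * (((j:ℂ)+1) * (j.choose i : ℂ)) * ((i : ℂ)+1) ^ m := by rw [cast1]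
          _ = -(((j:ℂ)+1)) * ((-1 : ℂ) ^ i * (j.choose i : ℂ) * ((i : ℂ)+1) ^ m) := by
              rw [pow_succ]; ring
      have e3 : ∑ i ∈ range (j + 2), (-1 : ℂ) ^ i * ((j+1).choose i : ℂ) * (i : ℂ) ^ m
          = (0:ℂ) ^ m + ∑ i ∈ range (j + 1), (-1 : ℂ) ^ (i+1) * ((j+1).choose (i+1) : ℂ) * ((i : ℂ)+1) ^ m := by
        rw [Finset.sum_range_succ']
        push_cast
        simp only [Nat.choose_zero_right, Nat.cast_one]
        ring
      have e5 : ∑ i ∈ range (j + 1), (-1 : ℂ) ^ (i+1) * (j.choose (i+1) : ℂ) * ((i : ℂ)+1) ^ m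
          = (∑ i ∈ range (j + 1), (-1 : ℂ) ^ i * (j.choose i : ℂ) * (i : ℂ) ^ m) - (0:ℂ) ^ m := by
        rw [Finset.sum_range_succ, Nat.choose_succ_self]
        rw [Finset.sum_range_succ' (fun i => (-1 : ℂ) ^ i * (j.choose i : ℂ) * (i : ℂ) ^ m) j]
        push_cast
        simp only [Nat.choose_zero_right, Nat.cast_one]
        ring
      have e4 : ∑ i ∈ range (j + 1), (-1 : ℂ) ^ (i+1) * ((j+1).choose (i+1) : ℂ) * ((i : ℂ)+1) ^ m
          = -(∑ i ∈ range (j + 1), (-1 : ℂ) ^ i * (j.choose i : ℂ) * ((i : ℂ)+1) ^ m)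
            + ((∑ i ∈ range (j + 1), (-1 : ℂ) ^ i * (j.choose i : ℂ) * (i : ℂ) ^ m) - (0:ℂ) ^ m) := by
        rw [← e5, ← Finset.sum_neg_distrib, ← Finset.sum_add_distrib]
        refine Finset.sum_congr rfl fun i _ => ?_
        rw [cast2, pow_succ]
        ring
      rw [e1, e2, e3, e4]
      ring
    rw [key, stirling_formula m (j+1), stirling_formula m j]
    have : (stirling (m+1) (j+1) : ℂ) = (j+1) * (stirling m (j+1) : ℂ) + (stirling m j : ℂ) := by
      rw [show stirling (m+1) (j+1) = (j+1) * stirling m (j+1) + stirling m j from rfl]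
      push_cast; ring
    rw [this]
    push_cast [Nat.factorial_succ]
    ring

lemma exp_hasSum (x : ℂ) : HasSum (fun m : ℕ => x ^ m / (m.factorial : ℂ)) (Complex.exp x) := by
  rw [Complex.exp_eq_exp_ℂ]
  exact NormedSpace.expSeries_div_hasSum_exp x

lemma norm_exp_sub_one_le' (x : ℂ) : ‖Complex.exp x - 1‖ ≤ Real.exp ‖x‖ - 1 := by
  have h1 : HasSum (fun m : ℕ => x ^ (m+1) / ((m+1).factorial : ℂ)) (Complex.exp x - 1) := by
    exact (hasSum_nat_add_iff (f := fun m : ℕ => x ^ m / (m.factorial : ℂ)) 1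
      (g := Complex.exp x - 1)).2 (by simpa using exp_hasSum x)
  have h2 : HasSum (fun m : ℕ => ‖x‖ ^ (m+1) / ((m+1).factorial : ℝ)) (Real.exp ‖x‖ - 1) := by
    exact (hasSum_nat_add_iff (f := fun m : ℕ => ‖x‖ ^ m / (m.factorial : ℝ)) 1
      (g := Real.exp ‖x‖ - 1)).2 (by simpa using Real.exp_eq_exp_ℝ ▸ NormedSpace.expSeries_div_hasSum_exp ‖x‖)
  refine h1.norm_le_of_bounded h2 fun m => ?_
  rw [norm_div, norm_pow]
  simp [Real.norm_natCast]

lemma egf_stirling (j : ℕ) (x : ℂ) :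
    HasSum (fun m : ℕ => ((-1 : ℂ) ^ j * (j.factorial : ℂ) * (stirling m j : ℂ)) * x ^ m / (m.factorial : ℂ))
      ((1 - Complex.exp x) ^ j) := by
  have hterm : ∀ i : ℕ, HasSum (fun m : ℕ => (-1 : ℂ) ^ i * (j.choose i : ℂ) * (((i : ℂ) * x) ^ m / (m.factorial : ℂ)))
      ((-1 : ℂ) ^ i * (j.choose i : ℂ) * Complex.exp ((i : ℂ) * x)) :=
    fun i => (exp_hasSum ((i : ℂ) * x)).mul_left _
  have hsum : HasSum (fun m : ℕ => ∑ i ∈ range (j + 1), (-1 : ℂ) ^ i * (j.choose i : ℂ) * (((i : ℂ) * x) ^ m / (m.factorial : ℂ)))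
      (∑ i ∈ range (j + 1), (-1 : ℂ) ^ i * (j.choose i : ℂ) * Complex.exp ((i : ℂ) * x)) :=
    hasSum_sum (fun i _ => hterm i)
  have hval : ∑ i ∈ range (j + 1), (-1 : ℂ) ^ i * (j.choose i : ℂ) * Complex.exp ((i : ℂ) * x)
      = (1 - Complex.exp x) ^ j := by
    have h1 : (1 - Complex.exp x) ^ j = ((-Complex.exp x) + 1) ^ j := by ring_nf
    rw [h1, add_pow]
    refine Finset.sum_congr rfl fun i hi => ?_
    rw [neg_pow, Complex.exp_nat_mul]
    ring
  rw [hval] at hsum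
  refine hsum.congr_fun fun m => ?_
  rw [← stirling_formula m j, Finset.sum_mul, Finset.sum_div]
  refine Finset.sum_congr rfl fun i _ => ?_
  rw [mul_pow]
  ring

lemma egf_stirling_real (j : ℕ) (t : ℝ) :
    HasSum (fun m : ℕ => ((j.factorial : ℝ) * (stirling m j : ℝ)) * t ^ m / (m.factorial : ℝ))
      ((Real.exp t - 1) ^ j) := by
  have h := ((egf_stirling j (t : ℂ)).mul_left ((-1 : ℂ) ^ j))
  rw [← Complex.hasSum_ofReal]
  have hv : ((((Real.exp t - 1) ^ j : ℝ)) : ℂ) = (-1 : ℂ) ^ j * (1 - Complex.exp (t : ℂ)) ^ j := by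
    push_cast
    rw [show Complex.exp (t : ℂ) - 1 = -(1 - Complex.exp (t : ℂ)) from by ring, neg_pow]
  rw [← hv] at h
  refine h.congr_fun fun m => ?_
  have hone : ((-1 : ℂ)) ^ j * ((-1 : ℂ)) ^ j = 1 := by
    rw [← mul_pow]; norm_num
  push_cast
  linear_combination (-( (j.factorial : ℂ) * (stirling m j : ℂ) * (t : ℂ) ^ m / (m.factorial : ℂ))) * hone

noncomputable def Acoef (z : ℂ) (k : ℕ) : ℂ :=
  ∑ j ∈ Finset.range k, (-1 : ℂ) ^ j * z ^ j * (z - 1) ^ (-(j : ℤ) - 1) *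
    (j.factorial : ℂ) * (stirling (k - 1) j : ℂ)

lemma hasSum_closed (z : ℂ) (hz : z ≠ 1) (u x : ℂ)
    (hx : ‖z‖ * (Real.exp ‖x‖ - 1) < ‖z - 1‖) :
    HasSum (fun n : ℕ => (∑ k ∈ Finset.range (n + 1), (k : ℂ) * (n.choose k : ℂ) *
        Acoef z k * u ^ (n - k)) * x ^ n / (n.factorial : ℂ))
      (x * Complex.exp (u * x) / (z * Complex.exp x - 1)) := by
  have hz1 : z - 1 ≠ 0 := sub_ne_zero.2 hz
  have hznorm : (0:ℝ) < ‖z - 1‖ := norm_pos_iff.2 hz1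
  set t : ℝ := ‖x‖ with ht
  have het : 0 ≤ Real.exp t - 1 := by
    have : (1:ℝ) ≤ Real.exp t := Real.one_le_exp (norm_nonneg x)
    linarith
  set r : ℝ := ‖z‖ * (Real.exp t - 1) / ‖z - 1‖ with hrdef
  have hr0 : 0 ≤ r := by positivity
  have hr1 : r < 1 := by
    rw [hrdef, div_lt_one hznorm]; exact hx
  -- the double-indexed family
  set c : ℕ → ℂ := fun j => z ^ j * (z - 1) ^ (-(j : ℤ) - 1) with hcdef
  set F : ℕ × ℕ → ℂ := fun p =>
    c p.1 * (((-1 : ℂ) ^ p.1 * ((p.1).factorial : ℂ) * (stirling p.2 p.1 : ℂ)) * x ^ p.2 / ((p.2).factorial : ℂ))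
    with hFdef
  have hzpow : ∀ j : ℕ, (z - 1) ^ (-(j : ℤ) - 1) = ((z - 1) ^ (j + 1))⁻¹ := by
    intro j
    rw [← zpow_natCast (z - 1) (j + 1), ← zpow_neg]
    congr 1
    push_cast; ring
  have hcnorm : ∀ j : ℕ, ‖c j‖ = ‖z‖ ^ j / ‖z - 1‖ ^ (j + 1) := by
    intro j
    rw [hcdef]
    simp only [norm_mul, norm_pow, hzpow, norm_inv, norm_pow]
    rw [div_eq_mul_inv]
  -- row sums (fixed j, sum over m)
  have hrow : ∀ j : ℕ, HasSum (fun m : ℕ => F (j, m)) (c j * (1 - Complex.exp x) ^ j) :=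
    fun j => (egf_stirling j x).mul_left (c j)
  have hrownorm : ∀ j : ℕ, HasSum (fun m : ℕ => ‖F (j, m)‖)
      (‖c j‖ * (Real.exp t - 1) ^ j) := by
    intro j
    refine ((egf_stirling_real j t).mul_left ‖c j‖).congr_fun fun m => ?_
    rw [hFdef]
    simp only [norm_mul, norm_div, norm_pow, norm_neg, norm_one, one_pow, one_mul,
      Complex.norm_natCast]
    try ring
  have hgeom : Summable (fun j : ℕ => ‖c j‖ * (Real.exp t - 1) ^ j) := by
    refine Summable.congr ((summable_geometric_of_lt_one hr0 hr1).mul_left (1 / ‖z - 1‖)) fun j => ?_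
    rw [hcnorm j, hrdef]
    rw [div_pow, mul_pow]
    field_simp
    ring
  have hFnorm : Summable (fun p : ℕ × ℕ => ‖F p‖) := by
    refine (summable_prod_of_nonneg (fun p => norm_nonneg _)).2 ⟨fun j => (hrownorm j).summable, ?_⟩
    refine hgeom.congr fun j => ?_
    exact ((hrownorm j).tsum_eq).symm
  have hF : Summable F := hFnorm.of_norm
  -- geometric series
  set w : ℂ := z * (1 - Complex.exp x) / (z - 1) with hwdef
  have hwnorm : ‖w‖ < 1 := by
    have h1 : ‖1 - Complex.exp x‖ ≤ Real.exp t - 1 := by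
      rw [norm_sub_rev]; exact norm_exp_sub_one_le' x
    have : ‖w‖ ≤ r := by
      rw [hwdef, hrdef, norm_div, norm_mul]
      gcongr
    exact lt_of_le_of_lt this hr1
  have hge : HasSum (fun j : ℕ => w ^ j) (1 - w)⁻¹ := hasSum_geometric_of_norm_lt_one hwnorm
  have hjsum : ∀ j : ℕ, c j * (1 - Complex.exp x) ^ j = (z - 1)⁻¹ * w ^ j := by
    intro j
    simp only [hcdef, hwdef]
    rw [hzpow j, div_pow, mul_pow, pow_succ, mul_inv, div_eq_mul_inv]
    ring
  have hden : (z - 1) * (1 - w) = z * Complex.exp x - 1 := by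
    rw [hwdef]
    field_simp
    ring
  have hwne : (1 : ℂ) - w ≠ 0 := by
    intro h
    rw [sub_eq_zero] at h
    rw [← h] at hwnorm
    simp at hwnorm
  have hne : z * Complex.exp x - 1 ≠ 0 := by
    rw [← hden]; exact mul_ne_zero hz1 hwne
  -- total sum of F
  have htsum : ∑' p : ℕ × ℕ, F p = (z * Complex.exp x - 1)⁻¹ := by
    rw [Summable.tsum_prod' hF (fun j => (hrow j).summable)]
    calc ∑' j : ℕ, ∑' m : ℕ, F (j, m) = ∑' j : ℕ, (z - 1)⁻¹ * w ^ j := by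
          refine tsum_congr fun j => ?_
          rw [(hrow j).tsum_eq, hjsum j]
      _ = (z - 1)⁻¹ * (1 - w)⁻¹ := (hge.mul_left _).tsum_eq
      _ = ((z - 1) * (1 - w))⁻¹ := (mul_inv _ _).symm
      _ = (z * Complex.exp x - 1)⁻¹ := by rw [hden]
  -- column sums (fixed m, sum over j) are finite
  have hcol : ∀ m : ℕ, HasSum (fun j : ℕ => F (j, m)) (∑ j ∈ range (m + 1), F (j, m)) := by
    intro m
    refine hasSum_sum_of_ne_finset_zero fun j hj => ?_
    have hjm : m < j := by simpa using hj
    rw [hFdef]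
    simp [stirling_eq_zero_of_lt m j hjm]
  have hgsum : HasSum (fun m : ℕ => ∑ j ∈ range (m + 1), F (j, m))
      (z * Complex.exp x - 1)⁻¹ := by
    have hswap : Summable (fun p : ℕ × ℕ => F p.swap) := hF.prod_symm
    have heq : ∑' p : ℕ × ℕ, F p.swap = ∑' p : ℕ × ℕ, F p :=
      (Equiv.prodComm ℕ ℕ).tsum_eq (f := F) --?
    have := hswap.hasSum.prod_fiberwise (g := fun m => ∑ j ∈ range (m + 1), F (j, m))
      (fun m => hcol m)
    rwa [heq, htsum] at this
  -- identify with Acoef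
  have hA : HasSum (fun m : ℕ => Acoef z (m + 1) * x ^ m / (m.factorial : ℂ))
      (z * Complex.exp x - 1)⁻¹ := by
    refine hgsum.congr_fun fun m => ?_
    rw [Acoef, Finset.sum_mul, Finset.sum_div]
    refine (Finset.sum_congr rfl fun j _ => ?_).symm
    rw [hFdef]
    simp only [Nat.add_sub_cancel]
    ring
  -- norm summability for the row-sum series
  have hAnorm : Summable (fun m : ℕ => ‖Acoef z (m + 1) * x ^ m / (m.factorial : ℂ)‖) := by
    have h1 := (summable_prod_of_nonneg (f := fun p : ℕ × ℕ => ‖F p.swap‖)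
      (fun p => norm_nonneg _)).1 (hFnorm.prod_symm)
    refine Summable.of_nonneg_of_le (fun m => norm_nonneg _) (fun m => ?_) h1.2
    have hcoln : HasSum (fun j : ℕ => ‖F (j, m)‖) (∑ j ∈ range (m + 1), ‖F (j, m)‖) := by
      refine hasSum_sum_of_ne_finset_zero fun j hj => ?_
      have hjm : m < j := by simpa using hj
      rw [hFdef]
      simp [stirling_eq_zero_of_lt m j hjm]
    have e1 : ∑' j : ℕ, ‖F (j, m)‖ = ∑ j ∈ range (m + 1), ‖F (j, m)‖ := hcoln.tsum_eq
    calc ‖Acoef z (m + 1) * x ^ m / (m.factorial : ℂ)‖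
        = ‖∑ j ∈ range (m + 1), F (j, m)‖ := by
          congr 1
          rw [Acoef, Finset.sum_mul, Finset.sum_div]
          refine Finset.sum_congr rfl fun j _ => ?_
          rw [hFdef]
          simp only [Nat.add_sub_cancel]
          ring
      _ ≤ ∑ j ∈ range (m + 1), ‖F (j, m)‖ := norm_sum_le _ _
      _ = ∑' j : ℕ, ‖F (j, m)‖ := e1.symm
  -- multiply by x and shift
  set a : ℕ → ℂ := fun k => (k : ℂ) * Acoef z k * x ^ k / (k.factorial : ℂ) with hadef
  have ha_succ : ∀ m : ℕ, a (m + 1) = Acoef z (m + 1) * x ^ (m + 1) / (m.factorial : ℂ) := by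
    intro m
    have hfac : ((m + 1).factorial : ℂ) = ((m : ℂ) + 1) * (m.factorial : ℂ) := by
      rw [Nat.factorial_succ]; push_cast; ring
    rw [hadef]
    calc ((m + 1 : ℕ) : ℂ) * Acoef z (m + 1) * x ^ (m + 1) / (((m + 1).factorial : ℕ) : ℂ)
        = (((m : ℂ) + 1) * (Acoef z (m + 1) * x ^ (m + 1))) / (((m : ℂ) + 1) * (m.factorial : ℂ)) := by
          rw [hfac]; push_cast; ring
      _ = Acoef z (m + 1) * x ^ (m + 1) / (m.factorial : ℂ) :=
          mul_div_mul_left _ _ (Nat.cast_add_one_ne_zero m)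
  have hxA : HasSum (fun m : ℕ => a (m + 1)) (x * (z * Complex.exp x - 1)⁻¹) := by
    refine (hA.mul_left x).congr_fun fun m => ?_
    rw [ha_succ m, pow_succ]
    ring
  have ha : HasSum a (x * (z * Complex.exp x - 1)⁻¹) := by
    have := (hasSum_nat_add_iff (f := a) 1).1 hxA
    simpa [hadef] using this
  have hanorm : Summable (fun k : ℕ => ‖a k‖) := by
    rw [← summable_nat_add_iff 1]
    refine Summable.congr (hAnorm.mul_left ‖x‖) fun m => ?_
    rw [ha_succ m, pow_succ]
    rw [show Acoef z (m+1) * (x ^ m * x) / (m.factorial : ℂ)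
      = x * (Acoef z (m+1) * x ^ m / (m.factorial : ℂ)) from by ring]
    rw [norm_mul]
  -- Cauchy product with exp(u x)
  set b : ℕ → ℂ := fun m => (u * x) ^ m / (m.factorial : ℂ) with hbdef
  have hb : HasSum b (Complex.exp (u * x)) := exp_hasSum (u * x)
  have hbnorm : Summable (fun m : ℕ => ‖b m‖) := by
    refine Summable.congr (Real.summable_pow_div_factorial ‖u * x‖) fun m => ?_
    rw [hbdef]
    simp [norm_div, norm_pow]
  have hcauchy := hasSum_sum_range_mul_of_summable_norm hanorm hbnorm
  rw [ha.tsum_eq, hb.tsum_eq] at hcauchy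
  have hval : x * (z * Complex.exp x - 1)⁻¹ * Complex.exp (u * x)
      = x * Complex.exp (u * x) / (z * Complex.exp x - 1) := by
    rw [div_eq_mul_inv]; ring
  rw [hval] at hcauchy
  refine hcauchy.congr_fun fun n => ?_
  rw [Finset.sum_mul, Finset.sum_div]
  refine Finset.sum_congr rfl fun k hk => ?_
  have hkn : k ≤ n := by simpa [Nat.lt_succ_iff] using hk
  simp only [hadef, hbdef]
  have hfac : (n.choose k : ℂ) * (k.factorial : ℂ) * ((n - k).factorial : ℂ) = (n.factorial : ℂ) := by
    exact_mod_cast congrArg (Nat.cast : ℕ → ℂ) (Nat.choose_mul_factorial_mul_factorial hkn)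
  have hxpow : x ^ k * x ^ (n - k) = x ^ n := by
    rw [← pow_add]
    congr 1
    omega
  have hk0 : (k.factorial : ℂ) ≠ 0 := Nat.cast_ne_zero.2 (Nat.factorial_ne_zero k)
  have hnk0 : ((n - k).factorial : ℂ) ≠ 0 := Nat.cast_ne_zero.2 (Nat.factorial_ne_zero (n - k))
  have hn0 : (n.factorial : ℂ) ≠ 0 := Nat.cast_ne_zero.2 (Nat.factorial_ne_zero n)
  have h2 : ((n.choose k : ℂ)) / (n.factorial : ℂ)
      = 1 / ((k.factorial : ℂ) * ((n - k).factorial : ℂ)) := by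
    rw [div_eq_div_iff hn0 (mul_ne_zero hk0 hnk0)]
    linear_combination hfac
  calc (k : ℂ) * (n.choose k : ℂ) * Acoef z k * u ^ (n - k) * x ^ n / (n.factorial : ℂ)
      = (k : ℂ) * Acoef z k * u ^ (n - k) * x ^ n * ((n.choose k : ℂ) / (n.factorial : ℂ)) := by
        ring
    _ = (k : ℂ) * Acoef z k * u ^ (n - k) * x ^ n
        * (1 / ((k.factorial : ℂ) * ((n - k).factorial : ℂ))) := by rw [h2]
    _ = (k : ℂ) * Acoef z k * x ^ k / (k.factorial : ℂ)
        * ((u * x) ^ (n - k) / ((n - k).factorial : ℂ)) := by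
        rw [mul_pow, ← hxpow]; ring

lemma coeff_eq_zero (d : ℕ → ℂ)
    (h : ∀ᶠ x : ℂ in nhds 0, HasSum (fun m : ℕ => d m * x ^ m) 0) : ∀ m, d m = 0 := by
  have hp : HasFPowerSeriesAt (0 : ℂ → ℂ) (FormalMultilinearSeries.ofScalars ℂ d) 0 := by
    rw [hasFPowerSeriesAt_iff]
    filter_upwards [h] with x hx
    have : (fun n : ℕ => x ^ n • (FormalMultilinearSeries.ofScalars ℂ d).coeff n)
        = fun n : ℕ => d n * x ^ n := by
      funext n
      rw [FormalMultilinearSeries.coeff, FormalMultilinearSeries.ofScalars]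
      simp [smul_eq_mul, List.prod_ofFn]
      try ring
    rw [this]
    simpa using hx
  have := hp.eq_zero
  intro m
  have h2 := (FormalMultilinearSeries.ofScalars_series_eq_zero (𝕜 := ℂ) ℂ).1 this
  exact congrFun h2 m

theorem apostolBernoulli_closed_form_Luo (z : ℂ) (hz : z ≠ 1) (B : ℕ → ℂ → ℂ)
    (hB : ∀ u : ℂ, ∀ᶠ x : ℂ in nhds 0,
      HasSum (fun m : ℕ => B m u * x ^ m / (m.factorial : ℂ))
        (x * Complex.exp (u * x) / (z * Complex.exp x - 1)))
    (n : ℕ) (u : ℂ) :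
    B n u = ∑ k ∈ Finset.range (n + 1), (k : ℂ) * (n.choose k : ℂ) *
      (∑ j ∈ Finset.range k, (-1 : ℂ) ^ j * z ^ j * (z - 1) ^ (-(j : ℤ) - 1) *
        (j.factorial : ℂ) * (stirling (k - 1) j : ℂ)) * u ^ (n - k) := by
  set C : ℕ → ℂ := fun n => ∑ k ∈ Finset.range (n + 1), (k : ℂ) * (n.choose k : ℂ) *
      Acoef z k * u ^ (n - k) with hCdef
  have hsmall : ∀ᶠ x : ℂ in nhds 0, ‖z‖ * (Real.exp ‖x‖ - 1) < ‖z - 1‖ := by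
    have hcont : Filter.Tendsto (fun x : ℂ => ‖z‖ * (Real.exp ‖x‖ - 1)) (nhds 0) (nhds 0) := by
      have : Continuous (fun x : ℂ => ‖z‖ * (Real.exp ‖x‖ - 1)) := by continuity
      have h0 : (fun x : ℂ => ‖z‖ * (Real.exp ‖x‖ - 1)) 0 = 0 := by simp
      simpa [h0] using this.tendsto (0 : ℂ)
    exact hcont.eventually_lt_const (norm_pos_iff.2 (sub_ne_zero.2 hz))
  have hzero : ∀ m, (B m u - C m) / (m.factorial : ℂ) = 0 := by
    refine coeff_eq_zero _ ?_
    filter_upwards [hB u, hsmall] with x hx1 hx2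
    have hx3 := hasSum_closed z hz u x hx2
    have := hx1.sub hx3
    simp only [sub_self] at this
    refine this.congr_fun fun m => ?_
    rw [hCdef]
    ring
  have hm := hzero n
  have hn0 : (n.factorial : ℂ) ≠ 0 := Nat.cast_ne_zero.2 (Nat.factorial_ne_zero n)
  field_simp at hm
  have hBC : B n u = C n := sub_eq_zero.1 (by simpa using hm)
  rw [hBC, hCdef]
  rfl
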